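/- Let q ≥ 3 be a prime power and χ a generator of the group of multiplicative characters of F_q (with the convention χ^i(0)=0). Then det[J_q(χ^i, χ^j)]_{1≤i,j≤q-2} = (q-1)^{q-3}, where J_q(χ^i,χ^j) = Σ_{x∈F_q} χ^i(x)·χ^j(1-x) is the Jacobi sum. -/

import Mathlib

open Matrix Finset Equiv

theorem stmt9 {F : Type*} [Field F] [Fintype F] (q : ℕ) (hq : Fintype.card F = q)
    (hq3 : 3 ≤ q) (χ : MulChar F ℂ) (hχ : ∀ ψ : MulChar F ℂ, ∃ k : ℕ, ψ = χ ^ k) :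
    Matrix.det (Matrix.of fun i j : Fin (q - 2) =>
      ∑ x : F, (χ ^ ((i : ℕ) + 1)) x * (χ ^ ((j : ℕ) + 1)) (1 - x)) =
      ((q : ℂ) - 1) ^ (q - 3) := by
  classical
  -- the order of χ is q - 1
  have hexp : NeZero ((Monoid.exponent Fˣ : ℕ) : ℂ) :=
    ⟨Nat.cast_ne_zero.mpr (Monoid.exponent_ne_zero_of_finite)⟩
  have hcard : Nat.card (MulChar F ℂ) = q - 1 := by
    rw [MulChar.card_eq_card_units_of_hasEnoughRootsOfUnity F ℂ, Nat.card_eq_fintype_card,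
      Fintype.card_units, hq]
  have hzp : Subgroup.zpowers χ = ⊤ := by
    rw [Subgroup.eq_top_iff']
    intro ψ
    obtain ⟨k, rfl⟩ := hχ ψ
    exact Subgroup.pow_mem _ (Subgroup.mem_zpowers χ) k
  have hord : orderOf χ = q - 1 := by
    rw [← Nat.card_zpowers, hzp, ← hcard]
    exact Subgroup.card_top
  -- power injectivity
  have hpowinj : ∀ i k : Fin (q - 2), χ ^ ((i : ℕ) + 1) = χ ^ ((k : ℕ) + 1) → i = k := by
    intro i k h
    have hi := i.isLt
    have hk := k.isLt
    have h1 : (i : ℕ) + 1 < orderOf χ := by rw [hord]; omega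
    have h2 : (k : ℕ) + 1 < orderOf χ := by rw [hord]; omega
    have := pow_injOn_Iio_orderOf (x := χ) (Set.mem_Iio.mpr h1) (Set.mem_Iio.mpr h2) h
    exact Fin.ext (by omega)
  -- the index set S = F \ {0, 1}
  set t : Finset F := {0, 1} with ht
  have hmem : ∀ x : F, x ∈ tᶜ ↔ x ≠ 0 ∧ x ≠ 1 := by
    intro x; simp [ht, not_or]
  have htcard : (tᶜ).card = q - 2 := by
    rw [Finset.card_compl, Finset.card_pair (zero_ne_one), hq]
  have hScard : Fintype.card ↥(tᶜ) = q - 2 := by rw [Fintype.card_coe, htcard]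
  let φ : Fin (q - 2) ≃ ↥(tᶜ) := (Fintype.equivFinOfCardEq hScard).symm
  -- the three permutations
  have he_inv : Function.Involutive (fun x : ↥(tᶜ) =>
      (⟨1 - x.1, by
        obtain ⟨h1, h2⟩ := (hmem x.1).mp x.2
        exact (hmem _).mpr ⟨sub_ne_zero.mpr (Ne.symm h2),
          fun h => h1 (by linear_combination -h)⟩⟩ : ↥(tᶜ))) := by
    intro x; ext; simp
  have hi_inv : Function.Involutive (fun x : ↥(tᶜ) =>
      (⟨x.1⁻¹, by
        obtain ⟨h1, h2⟩ := (hmem x.1).mp x.2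
        exact (hmem _).mpr ⟨inv_ne_zero h1, by
          intro h; apply h2; rw [← inv_inv x.1, h, inv_one]⟩⟩ : ↥(tᶜ))) := by
    intro x; ext; exact inv_inv _
  set pe : Equiv.Perm ↥(tᶜ) := he_inv.toPerm with hpe
  set pi : Equiv.Perm ↥(tᶜ) := hi_inv.toPerm with hpi
  have hpe_apply : ∀ x : ↥(tᶜ), ((pe x : ↥(tᶜ)) : F) = 1 - x.1 := fun x => rfl
  have hpi_apply : ∀ x : ↥(tᶜ), ((pi x : ↥(tᶜ)) : F) = (x.1)⁻¹ := fun x => rfl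
  -- pe * pi has order dividing 3
  have key : ∀ y : F, y ≠ 0 → y ≠ 1 → 1 - (1 - (1 - y⁻¹)⁻¹)⁻¹ = y := by
    intro y h1 h2
    have hy1 : y - 1 ≠ 0 := sub_ne_zero.mpr h2
    rw [show (1:F) - y⁻¹ = (y - 1) / y by field_simp, inv_div,
      show (1:F) - y/(y-1) = (-1)/(y-1) by
        rw [eq_div_iff hy1, sub_mul, div_mul_cancel₀ _ hy1]; ring, inv_div,
      show (y-1)/(-1 : F) = 1 - y by ring]
    ring
  have hcube : (pe * pi) ^ 3 = 1 := by
    ext x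
    obtain ⟨h1, h2⟩ := (hmem x.1).mp x.2
    simp only [pow_succ, pow_zero, one_mul, Equiv.Perm.mul_apply, Equiv.Perm.coe_one, id_eq]
    simp only [hpe_apply, hpi_apply]
    exact key x.1 h1 h2
  have hsign : Equiv.Perm.sign pe * Equiv.Perm.sign pi = 1 := by
    have h1 : (Equiv.Perm.sign pe * Equiv.Perm.sign pi) ^ 3 = 1 := by
      rw [← _root_.map_mul, ← _root_.map_pow, hcube, _root_.map_one]
    have h2 : (Equiv.Perm.sign pe * Equiv.Perm.sign pi) ^ 2 = 1 := Int.units_sq _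
    calc Equiv.Perm.sign pe * Equiv.Perm.sign pi
        = (Equiv.Perm.sign pe * Equiv.Perm.sign pi) ^ 3 := by rw [pow_succ, h2, one_mul]
      _ = 1 := h1
  -- permutations on Fin (q-2)
  set σe : Equiv.Perm (Fin (q - 2)) := φ.symm.permCongr pe with hσe
  set σi : Equiv.Perm (Fin (q - 2)) := φ.symm.permCongr pi with hσi
  have hsign' : ((Equiv.Perm.sign σe : ℤ) : ℂ) * ((Equiv.Perm.sign σi : ℤ) : ℂ) = 1 := by
    rw [hσe, hσi, Equiv.Perm.sign_permCongr, Equiv.Perm.sign_permCongr]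
    rw [← Int.cast_mul, ← Units.val_mul, hsign, Units.val_one, Int.cast_one]
  have hσe_apply : ∀ j, φ (σe j) = pe (φ j) := by
    intro j; rw [hσe]; simp [Equiv.permCongr_apply]
  have hσi_apply : ∀ j, φ (σi j) = pi (φ j) := by
    intro j; rw [hσi]; simp [Equiv.permCongr_apply]
  -- summation lemmas
  have hsum2 : ∀ f : F → ℂ, ∑ j : Fin (q - 2), f (φ j) = ∑ x ∈ tᶜ, f x := by
    intro f
    exact (Fintype.sum_equiv φ (fun j => f ((φ j : ↥(tᶜ)) : F)) (fun x => f x)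
      (fun j => rfl)).trans (Finset.sum_coe_sort tᶜ f)
  have hsum : ∀ f : F → ℂ, f 0 = 0 → f 1 = 0 → ∑ x : F, f x = ∑ j : Fin (q - 2), f (φ j) := by
    intro f h0 h1
    rw [hsum2, ← Finset.sum_compl_add_sum t f, ht, Finset.sum_pair zero_ne_one, h0, h1,
      add_zero, add_zero]
  -- the matrix C
  set C : Matrix (Fin (q - 2)) (Fin (q - 2)) ℂ :=
    Matrix.of (fun i j => (χ ^ ((i : ℕ) + 1)) ((φ j : ↥(tᶜ)) : F)) with hC
  -- M = C * (C ∘ σe)ᵀ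
  have hM : (Matrix.of fun i j : Fin (q - 2) =>
      ∑ x : F, (χ ^ ((i : ℕ) + 1)) x * (χ ^ ((j : ℕ) + 1)) (1 - x))
      = C * (C.submatrix id σe)ᵀ := by
    ext i k
    rw [Matrix.mul_apply, Matrix.of_apply]
    rw [hsum (fun x => (χ ^ ((i : ℕ) + 1)) x * (χ ^ ((k : ℕ) + 1)) (1 - x))
      (by simp [MulChar.map_zero]) (by simp [MulChar.map_zero])]
    apply Finset.sum_congr rfl
    intro j _
    rw [Matrix.transpose_apply, Matrix.submatrix_apply, hC, Matrix.of_apply, Matrix.of_apply,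
      id_eq, hσe_apply j, hpe_apply]
  -- the orthogonality matrix G
  set G : Matrix (Fin (q - 2)) (Fin (q - 2)) ℂ :=
    Matrix.of (fun i k => if i = k then ((q : ℂ) - 2) else -1) with hG
  have hCG : C * (C.submatrix id σi)ᵀ = G := by
    ext i k
    rw [Matrix.mul_apply]
    have hterm : ∀ j, C i j * (C.submatrix id σi)ᵀ j k
        = (χ ^ ((i : ℕ) + 1) * (χ ^ ((k : ℕ) + 1))⁻¹) ((φ j : ↥(tᶜ)) : F) := by
      intro j
      rw [Matrix.transpose_apply, Matrix.submatrix_apply, id_eq, hC, Matrix.of_apply,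
        Matrix.of_apply, hσi_apply j, hpi_apply,
        ← MulChar.inv_apply' (χ ^ ((k : ℕ) + 1)) _]
      rw [MulChar.coeToFun_mul, Pi.mul_apply]
    rw [Finset.sum_congr rfl (fun j _ => hterm j)]
    by_cases hik : i = k
    · subst hik
      rw [hG, Matrix.of_apply, if_pos rfl]
      have hone : ∀ j : Fin (q - 2),
          (χ ^ ((i : ℕ) + 1) * (χ ^ ((i : ℕ) + 1))⁻¹) ((φ j : ↥(tᶜ)) : F) = 1 := by
        intro j
        rw [mul_inv_cancel]
        exact MulChar.one_apply (isUnit_iff_ne_zero.mpr ((hmem _).mp (φ j).2).1)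
      rw [Finset.sum_congr rfl (fun j _ => hone j), Finset.sum_const, Finset.card_univ,
        Fintype.card_fin, nsmul_eq_mul, mul_one]
      have hq2 : ((q - 2 : ℕ) : ℂ) = (q : ℂ) - 2 := by
        have : (2 : ℕ) ≤ q := by omega
        push_cast [Nat.cast_sub this]
        ring
      rw [hq2]
    · rw [hG, Matrix.of_apply, if_neg hik]
      set ψ : MulChar F ℂ := χ ^ ((i : ℕ) + 1) * (χ ^ ((k : ℕ) + 1))⁻¹ with hψ
      have hψne : ψ ≠ 1 := by
        intro h
        apply hik
        apply hpowinj
        have h2 := congrArg (· * (χ ^ ((k : ℕ) + 1))) h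
        simpa [hψ, mul_assoc, inv_mul_cancel] using h2
      have hzero : ∑ x : F, ψ x = 0 := MulChar.sum_eq_zero_of_ne_one hψne
      rw [hsum2 (fun x => ψ x)]
      have hcompl := Finset.sum_compl_add_sum t (fun x => ψ x)
      rw [ht, Finset.sum_pair zero_ne_one, MulChar.map_zero, ψ.map_one, hzero] at hcompl
      linear_combination hcompl
  -- determinant of G
  have hc : (q : ℂ) - 1 ≠ 0 := by
    intro h
    have h1 : (q : ℂ) = 1 := by linear_combination h
    have h2 : (q : ℕ) = 1 := by exact_mod_cast h1
    omega
  have hdetG : G.det = ((q : ℂ) - 1) ^ (q - 3) := by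
    have hGeq : G = ((q : ℂ) - 1) •
        (1 + Matrix.replicateCol (Fin 1) (fun _ : Fin (q - 2) => -((q : ℂ) - 1)⁻¹) * Matrix.replicateRow (Fin 1) (fun _ : Fin (q - 2) => (1 : ℂ))) := by
      ext i k
      rw [hG, Matrix.of_apply, Matrix.smul_apply, Matrix.add_apply, Matrix.mul_apply]
      simp only [Matrix.replicateCol_apply, Matrix.replicateRow_apply, Finset.sum_const, Finset.card_univ,
        Fintype.card_fin, one_smul, smul_eq_mul]
      by_cases hik : i = k
      · subst hik
        rw [if_pos rfl, Matrix.one_apply_eq]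
        field_simp
        ring
      · rw [if_neg hik, Matrix.one_apply_ne hik]
        field_simp
        ring
    rw [hGeq, Matrix.det_smul]
    erw [Matrix.det_one_add_replicateCol_mul_replicateRow (ι := Fin 1)]
    rw [Fintype.card_fin]
    have hdot : ((fun _ : Fin (q-2) => (1:ℂ)) ⬝ᵥ fun _ => -((q : ℂ) - 1)⁻¹)
        = -(((q : ℂ) - 2) * ((q : ℂ) - 1)⁻¹) := by
      rw [dotProduct]
      simp only [one_mul, Finset.sum_const, Finset.card_univ, Fintype.card_fin,
        nsmul_eq_mul]
      have hq2 : ((q - 2 : ℕ) : ℂ) = (q : ℂ) - 2 := by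
        have : (2 : ℕ) ≤ q := by omega
        push_cast [Nat.cast_sub this]
        ring
      rw [hq2]
      ring
    rw [hdot]
    have h1 : 1 + -(((q : ℂ) - 2) * ((q : ℂ) - 1)⁻¹) = ((q : ℂ) - 1)⁻¹ := by
      field_simp
      ring
    rw [h1]
    have h2 : q - 2 = (q - 3) + 1 := by omega
    rw [h2, pow_succ, mul_assoc, mul_inv_cancel₀ hc, mul_one]
  -- put everything together
  have hsq : ((Equiv.Perm.sign σe : ℤ) : ℂ) * ((Equiv.Perm.sign σe : ℤ) : ℂ) = 1 := by
    rw [← Int.cast_mul, ← Units.val_mul, Int.units_mul_self, Units.val_one, Int.cast_one]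
  have hdetM : (C * (C.submatrix id σe)ᵀ).det
      = ((Equiv.Perm.sign σe : ℤ) : ℂ) * (C.det * C.det) := by
    rw [Matrix.det_mul, Matrix.det_transpose, Matrix.det_permute']
    ring
  have hdetCG : (C * (C.submatrix id σi)ᵀ).det
      = ((Equiv.Perm.sign σi : ℤ) : ℂ) * (C.det * C.det) := by
    rw [Matrix.det_mul, Matrix.det_transpose, Matrix.det_permute']
    ring
  rw [hM, hdetM]
  have hCC : C.det * C.det = ((Equiv.Perm.sign σi : ℤ) : ℂ) * ((q : ℂ) - 1) ^ (q - 3) := by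
    have := hdetCG
    rw [hCG, hdetG] at this
    have hsqi : ((Equiv.Perm.sign σi : ℤ) : ℂ) * ((Equiv.Perm.sign σi : ℤ) : ℂ) = 1 := by
      rw [← Int.cast_mul, ← Units.val_mul, Int.units_mul_self, Units.val_one, Int.cast_one]
    calc C.det * C.det = (((Equiv.Perm.sign σi : ℤ) : ℂ) * ((Equiv.Perm.sign σi : ℤ) : ℂ))
          * (C.det * C.det) := by rw [hsqi, one_mul]
      _ = ((Equiv.Perm.sign σi : ℤ) : ℂ) * (((Equiv.Perm.sign σi : ℤ) : ℂ) * (C.det * C.det)) := by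
          ring
      _ = ((Equiv.Perm.sign σi : ℤ) : ℂ) * ((q : ℂ) - 1) ^ (q - 3) := by rw [← this]
  rw [hCC, ← mul_assoc, hsign', one_mul]
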